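/- Let A, B ∈ B(H) with AB = BA, and let α ≥ 0, β > 0. Then ‖AB‖_{α,β} ≤ √( 4α/(α+β)² + 1/β ) · ‖A‖_{α,β} · ‖B‖_{α,β}. -/

import Mathlib

set_option linter.unusedSectionVars false
set_option maxHeartbeats 1000000


open ContinuousLinearMap

variable {H : Type*} [NormedAddCommGroup H] [InnerProductSpace ℂ H] [CompleteSpace H]

/-- The numerical radius `w(T) = sup {|⟨Tx,x⟩| : ‖x‖ = 1}`. -/
noncomputable def numRad (T : H →L[ℂ] H) : ℝ :=
  sSup {r : ℝ | ∃ x : H, ‖x‖ = 1 ∧ r = ‖(inner ℂ (T x) x : ℂ)‖}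

/-- The `(α,β)`-norm `‖T‖_{α,β} = sup {√(α|⟨Tx,x⟩|² + β‖Tx‖²) : ‖x‖ = 1}`. -/
noncomputable def abNorm (α β : ℝ) (T : H →L[ℂ] H) : ℝ :=
  sSup {r : ℝ | ∃ x : H, ‖x‖ = 1 ∧
    r = Real.sqrt (α * ‖(inner ℂ (T x) x : ℂ)‖ ^ 2 + β * ‖T x‖ ^ 2)}


local notation "⟪" x ", " y "⟫" => @inner ℂ _ _ x y

lemma numRad_nonneg (T : H →L[ℂ] H) : 0 ≤ numRad T := by
  apply Real.sSup_nonneg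
  rintro r ⟨x, hx, rfl⟩
  positivity

lemma numRad_bdd (T : H →L[ℂ] H) :
    BddAbove {r : ℝ | ∃ x : H, ‖x‖ = 1 ∧ r = ‖(inner ℂ (T x) x : ℂ)‖} := by
  refine ⟨‖T‖, ?_⟩
  rintro r ⟨x, hx, rfl⟩
  calc ‖(inner ℂ (T x) x : ℂ)‖ ≤ ‖T x‖ * ‖x‖ := norm_inner_le_norm _ _
    _ ≤ ‖T‖ * ‖x‖ * ‖x‖ := by
        have := T.le_opNorm x
        nlinarith [norm_nonneg x]
    _ = ‖T‖ := by rw [hx]; ring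

lemma inner_le_numRad (T : H →L[ℂ] H) {x : H} (hx : ‖x‖ = 1) :
    ‖(⟪T x, x⟫ : ℂ)‖ ≤ numRad T :=
  le_csSup (numRad_bdd T) ⟨x, hx, rfl⟩

lemma inner_le_numRad' (T : H →L[ℂ] H) (u : H) :
    ‖(⟪T u, u⟫ : ℂ)‖ ≤ numRad T * ‖u‖ ^ 2 := by
  rcases eq_or_ne u 0 with rfl | hu
  · simp
  · have hn : (0:ℝ) < ‖u‖ := norm_pos_iff.2 hu
    set c : ℂ := (‖u‖ : ℂ)⁻¹ with hc
    have hcn : ‖c‖ = ‖u‖⁻¹ := by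
      rw [hc, norm_inv, Complex.norm_real, Real.norm_eq_abs, abs_of_pos hn]
    have hx : ‖c • u‖ = 1 := by
      rw [norm_smul, hcn]
      field_simp
    have h := inner_le_numRad T hx
    have he : ‖(⟪T (c • u), c • u⟫ : ℂ)‖ = ‖u‖⁻¹ ^ 2 * ‖(⟪T u, u⟫ : ℂ)‖ := by
      rw [map_smul, inner_smul_left, inner_smul_right]
      simp [norm_mul, hcn]
      ring
    rw [he] at h
    have h2 : ‖(⟪T u, u⟫ : ℂ)‖ = ‖u‖ ^ 2 * (‖u‖⁻¹ ^ 2 * ‖(⟪T u, u⟫ : ℂ)‖) := by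
      field_simp
    rw [h2]
    have := numRad_nonneg T
    nlinarith [norm_nonneg ((⟪T u, u⟫ : ℂ)), sq_nonneg (‖u‖⁻¹)]

lemma re_inner_le (T : H →L[ℂ] H) (u : H) :
    (⟪T u, u⟫ : ℂ).re ≤ numRad T * ‖u‖ ^ 2 :=
  le_trans (Complex.re_le_norm _) (le_trans (le_of_eq rfl)
    (inner_le_numRad' T u))

lemma neg_re_inner_le (T : H →L[ℂ] H) (u : H) :
    -(⟪T u, u⟫ : ℂ).re ≤ numRad T * ‖u‖ ^ 2 := by
  have h := inner_le_numRad' T u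
  have : |(⟪T u, u⟫ : ℂ).re| ≤ ‖(⟪T u, u⟫ : ℂ)‖ := Complex.abs_re_le_norm _
  have := abs_le.mp (le_trans this h)
  linarith [this.1]

/-- Key polarization bound: `|⟨T²x, x⟩| ≤ w(T)²` for a unit vector `x`. -/
lemma inner_sq_le (T : H →L[ℂ] H) {x : H} (hx : ‖x‖ = 1) :
    ‖(⟪T (T x), x⟫ : ℂ)‖ ≤ numRad T ^ 2 := by
  set w := numRad T with hwdef
  have hw : 0 ≤ w := numRad_nonneg T
  set a : ℂ := ⟪T (T x), x⟫ with ha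
  rcases eq_or_ne a 0 with ha0 | ha0
  · rw [ha0]; simpa using sq_nonneg w
  -- choose a unit phase d with conj(d*d) * a = ‖a‖
  obtain ⟨d, hd1, hd2⟩ : ∃ d : ℂ, ‖d‖ = 1 ∧ (starRingEnd ℂ) (d * d) * a = (‖a‖ : ℂ) := by
    set e : ℂ := (‖a‖ : ℂ) / a with he
    have hea : e * a = (‖a‖ : ℂ) := div_mul_cancel₀ _ ha0
    have hen : ‖e‖ = 1 := by
      rw [he, norm_div, Complex.norm_real, Real.norm_eq_abs, abs_of_nonneg (norm_nonneg a)]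
      field_simp
    have hene : (starRingEnd ℂ) e ≠ 0 := by
      simp only [ne_eq, map_eq_zero]
      intro h; rw [h] at hen; simp at hen
    refine ⟨Complex.exp (Complex.log ((starRingEnd ℂ) e) / 2), ?_, ?_⟩
    · rw [Complex.norm_exp]
      have : (Complex.log ((starRingEnd ℂ) e) / 2).re = (Complex.log ((starRingEnd ℂ) e)).re / 2 := by
        simp [Complex.div_re]
      rw [this, Complex.log_re]
      have : ‖(starRingEnd ℂ) e‖ = 1 := by
        rw [RCLike.norm_conj, hen]
      rw [this]; simp
    · have : Complex.exp (Complex.log ((starRingEnd ℂ) e) / 2) *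
          Complex.exp (Complex.log ((starRingEnd ℂ) e) / 2) = (starRingEnd ℂ) e := by
        rw [← Complex.exp_add]
        ring_nf
        exact Complex.exp_log hene
      rw [this, Complex.conj_conj]
      exact hea
  set S : H →L[ℂ] H := d • T with hS
  have hSnorm : ∀ u : H, ‖(⟪S u, u⟫ : ℂ)‖ = ‖(⟪T u, u⟫ : ℂ)‖ := by
    intro u
    rw [hS, ContinuousLinearMap.smul_apply, inner_smul_left, norm_mul, RCLike.norm_conj, hd1,
      one_mul]
  have hSw : ∀ u : H, (⟪S u, u⟫ : ℂ).re ≤ w * ‖u‖ ^ 2 := by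
    intro u
    calc (⟪S u, u⟫ : ℂ).re ≤ ‖(⟪S u, u⟫ : ℂ)‖ :=
          le_trans (Complex.re_le_norm _) (le_of_eq rfl)
      _ = ‖(⟪T u, u⟫ : ℂ)‖ := hSnorm u
      _ ≤ w * ‖u‖ ^ 2 := inner_le_numRad' T u
  have hSwn : ∀ u : H, -(⟪S u, u⟫ : ℂ).re ≤ w * ‖u‖ ^ 2 := by
    intro u
    have h1 : |(⟪S u, u⟫ : ℂ).re| ≤ ‖(⟪S u, u⟫ : ℂ)‖ := Complex.abs_re_le_norm _
    have h2 := (hSnorm u) ▸ h1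
    have := abs_le.mp (le_trans h2 (inner_le_numRad' T u))
    linarith [this.1]
  have hSx : ‖S x‖ = ‖T x‖ := by
    rw [hS, ContinuousLinearMap.smul_apply, norm_smul, hd1, one_mul]
  have key : ∀ t : ℝ, t * (‖T x‖ ^ 2 + ‖a‖) ≤ w * (1 + t ^ 2 * ‖T x‖ ^ 2) := by
    intro t
    set y : H := (t : ℂ) • S x with hy
    have e3 : (⟪S x, y⟫ : ℂ) = (t : ℂ) * (‖T x‖ : ℂ) ^ 2 := by
      rw [hy, inner_smul_right, inner_self_eq_norm_sq_to_K, hSx]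
      norm_cast
      exact (Complex.ofReal_mul t _).symm
    have hSSx : S (S x) = (d * d) • T (T x) := by
      rw [hS]
      simp [smul_smul, mul_comm]
    have e4 : (⟪S y, x⟫ : ℂ) = (t : ℂ) * (‖a‖ : ℂ) := by
      rw [hy, map_smul, inner_smul_left, Complex.conj_ofReal, hSSx, inner_smul_left, ← ha, hd2]
    have ediff : (⟪S (x + y), x + y⟫ : ℂ) - ⟪S (x - y), x - y⟫ =
        2 * (⟪S x, y⟫ + ⟪S y, x⟫) := by
      simp only [map_add, map_sub, inner_add_left, inner_add_right, inner_sub_left,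
        inner_sub_right]
      ring
    have hre : (⟪S (x + y), x + y⟫ : ℂ).re - (⟪S (x - y), x - y⟫ : ℂ).re =
        2 * t * (‖T x‖ ^ 2 + ‖a‖) := by
      rw [e3, e4] at ediff
      have : ((2 * t * (‖T x‖ ^ 2 + ‖a‖) : ℝ) : ℂ) =
          2 * ((t : ℂ) * (‖T x‖ : ℂ) ^ 2 + (t : ℂ) * (‖a‖ : ℂ)) := by
        push_cast
        ring
      rw [← Complex.sub_re, ediff, ← this, Complex.ofReal_re]
    have hynorm : ‖y‖ ^ 2 = t ^ 2 * ‖T x‖ ^ 2 := by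
      rw [hy, norm_smul, hSx, Complex.norm_real, Real.norm_eq_abs, mul_pow, sq_abs]
    have hnorm : ‖x + y‖ ^ 2 + ‖x - y‖ ^ 2 = 2 * (1 + t ^ 2 * ‖T x‖ ^ 2) := by
      rw [@norm_add_sq ℂ _ _ _ _ x y, @norm_sub_sq ℂ _ _ _ _ x y, hx, hynorm]
      ring
    have h1 := hSw (x + y)
    have h2 := hSwn (x - y)
    nlinarith [h1, h2, hre, hnorm]
  rcases eq_or_lt_of_le hw with hw0 | hw0
  · have := key 1
    rw [← hw0] at this
    nlinarith [norm_nonneg (T x), this, sq_nonneg w]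
  · have hk := key (1 / w)
    have hwt : w * (1 / w) = 1 := mul_one_div_cancel hw0.ne'
    have hmul := mul_le_mul_of_nonneg_left hk hw0.le
    have h3 : w * (1 / w * (‖T x‖ ^ 2 + ‖a‖)) = ‖T x‖ ^ 2 + ‖a‖ := by
      field_simp
    have h4 : w * (w * (1 + (1 / w) ^ 2 * ‖T x‖ ^ 2)) = w ^ 2 + ‖T x‖ ^ 2 := by
      field_simp
    rw [h3, h4] at hmul
    linarith

lemma numRad_add_le (A B : H →L[ℂ] H) : numRad (A + B) ≤ numRad A + numRad B := by
  apply Real.sSup_le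
  · rintro r ⟨x, hx, rfl⟩
    have : (⟪(A + B) x, x⟫ : ℂ) = ⟪A x, x⟫ + ⟪B x, x⟫ := by
      simp [inner_add_left]
    rw [this]
    exact le_trans (norm_add_le _ _)
      (add_le_add (inner_le_numRad A hx) (inner_le_numRad B hx))
  · exact add_nonneg (numRad_nonneg A) (numRad_nonneg B)

lemma numRad_smul_le (c : ℂ) (T : H →L[ℂ] H) : numRad (c • T) ≤ ‖c‖ * numRad T := by
  apply Real.sSup_le
  · rintro r ⟨x, hx, rfl⟩
    have : (⟪(c • T) x, x⟫ : ℂ) = (starRingEnd ℂ) c * ⟪T x, x⟫ := by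
      rw [ContinuousLinearMap.smul_apply, inner_smul_left]
    rw [this, norm_mul, RCLike.norm_conj]
    exact mul_le_mul_of_nonneg_left (inner_le_numRad T hx) (norm_nonneg c)
  · exact mul_nonneg (norm_nonneg c) (numRad_nonneg T)

lemma numRad_sub_le (A B : H →L[ℂ] H) : numRad (A - B) ≤ numRad A + numRad B := by
  have h1 : A - B = A + (-1 : ℂ) • B := by
    simp [sub_eq_add_neg]
  have e : (-1 : ℂ) • B = -B := by simp
  have hs := numRad_smul_le (-1 : ℂ) B
  simp only [e] at hs
  have h1' : ‖(-1 : ℂ)‖ = 1 := by norm_num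
  rw [h1', one_mul] at hs
  rw [h1, e]
  refine le_trans (numRad_add_le _ _) ?_
  linarith

lemma numRad_le_zero (T : H →L[ℂ] H) (h : ∀ x : H, ‖x‖ = 1 → (⟪T x, x⟫ : ℂ) = 0) :
    numRad T ≤ 0 := by
  apply Real.sSup_le _ le_rfl
  rintro r ⟨x, hx, rfl⟩
  rw [h x hx]
  simp

lemma eq_zero_of_numRad (T : H →L[ℂ] H) (h : numRad T ≤ 0) : T = 0 := by
  have hz : ∀ u : H, (⟪T u, u⟫ : ℂ) = 0 := by
    intro u
    have := inner_le_numRad' T u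
    have h2 : ‖(⟪T u, u⟫ : ℂ)‖ ≤ 0 := by nlinarith [sq_nonneg ‖u‖]
    exact norm_le_zero_iff.mp h2
  have := (inner_map_self_eq_zero (T : H →ₗ[ℂ] H)).mp hz
  ext u
  have := congrFun (congrArg DFunLike.coe this) u
  simpa using this

lemma numRad_mul_le_half (A B : H →L[ℂ] H) (hAB : A * B = B * A) :
    numRad (A * B) ≤ (numRad A + numRad B) ^ 2 / 2 := by
  have h4 : (A + B) * (A + B) - (A - B) * (A - B) = A * B + A * B + A * B + A * B := by
    have expand : (A + B) * (A + B) - (A - B) * (A - B) = A * B + B * A + A * B + B * A := by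
      noncomm_ring
    rw [expand, hAB]
  apply Real.sSup_le
  · rintro r ⟨x, hx, rfl⟩
    have hinner : (4 : ℂ) * ⟪(A * B) x, x⟫ =
        ⟪((A + B) * (A + B)) x, x⟫ - ⟪((A - B) * (A - B)) x, x⟫ := by
      have := congrArg (fun P : H →L[ℂ] H => (⟪P x, x⟫ : ℂ)) h4
      simp only [ContinuousLinearMap.sub_apply, ContinuousLinearMap.add_apply,
        inner_sub_left, inner_add_left] at this
      rw [this]
      ring
    have h1 : ‖(⟪((A + B) * (A + B)) x, x⟫ : ℂ)‖ ≤ (numRad A + numRad B) ^ 2 := by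
      have : (((A + B) * (A + B)) x) = (A + B) ((A + B) x) := rfl
      rw [this]
      refine le_trans (inner_sq_le (A + B) hx) ?_
      have h := numRad_add_le A B
      nlinarith [numRad_nonneg (A + B), numRad_nonneg A, numRad_nonneg B]
    have h2 : ‖(⟪((A - B) * (A - B)) x, x⟫ : ℂ)‖ ≤ (numRad A + numRad B) ^ 2 := by
      have : (((A - B) * (A - B)) x) = (A - B) ((A - B) x) := rfl
      rw [this]
      refine le_trans (inner_sq_le (A - B) hx) ?_
      have h := numRad_sub_le A B
      nlinarith [numRad_nonneg (A - B), numRad_nonneg A, numRad_nonneg B]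
    have h3 : (4 : ℝ) * ‖(⟪(A * B) x, x⟫ : ℂ)‖ ≤ 2 * (numRad A + numRad B) ^ 2 := by
      have : ‖(4 : ℂ) * ⟪(A * B) x, x⟫‖ = 4 * ‖(⟪(A * B) x, x⟫ : ℂ)‖ := by
        rw [norm_mul]
        norm_num
      rw [← this, hinner]
      exact le_trans (norm_sub_le _ _) (by linarith)
    linarith
  · nlinarith [sq_nonneg (numRad A + numRad B)]

lemma numRad_zero_op : numRad (0 : H →L[ℂ] H) ≤ 0 :=
  numRad_le_zero 0 (fun x _ => by simp)

lemma numRad_mul_le (A B : H →L[ℂ] H) (hAB : A * B = B * A) :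
    numRad (A * B) ≤ 2 * numRad A * numRad B := by
  set a := numRad A with hadef
  set b := numRad B with hbdef
  have ha0 : 0 ≤ a := numRad_nonneg A
  have hb0 : 0 ≤ b := numRad_nonneg B
  rcases eq_or_lt_of_le ha0 with haz | hap
  · have hA : A = 0 := eq_zero_of_numRad A (le_of_eq haz.symm)
    rw [hA, zero_mul]
    have := numRad_zero_op (H := H)
    nlinarith
  rcases eq_or_lt_of_le hb0 with hbz | hbp
  · have hB : B = 0 := eq_zero_of_numRad B (le_of_eq hbz.symm)
    rw [hB, mul_zero]
    have := numRad_zero_op (H := H)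
    nlinarith
  -- normalize
  set A' : H →L[ℂ] H := ((a : ℂ))⁻¹ • A with hA'
  set B' : H →L[ℂ] H := ((b : ℂ))⁻¹ • B with hB'
  have hanc : ‖((a : ℂ))⁻¹‖ = a⁻¹ := by
    rw [norm_inv, Complex.norm_real, Real.norm_eq_abs, abs_of_pos hap]
  have hbnc : ‖((b : ℂ))⁻¹‖ = b⁻¹ := by
    rw [norm_inv, Complex.norm_real, Real.norm_eq_abs, abs_of_pos hbp]
  have hwA' : numRad A' ≤ 1 := by
    refine le_trans (numRad_smul_le _ _) ?_
    rw [hanc, ← hadef]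
    rw [inv_mul_cancel₀ (ne_of_gt hap)]
  have hwB' : numRad B' ≤ 1 := by
    refine le_trans (numRad_smul_le _ _) ?_
    rw [hbnc, ← hbdef]
    rw [inv_mul_cancel₀ (ne_of_gt hbp)]
  have hcomm' : A' * B' = B' * A' := by
    rw [hA', hB', smul_mul_smul_comm, smul_mul_smul_comm, hAB, mul_comm]
  have hhalf : numRad (A' * B') ≤ 2 := by
    refine le_trans (numRad_mul_le_half A' B' hcomm') ?_
    nlinarith [numRad_nonneg A', numRad_nonneg B']
  have hABfac : A * B = ((a : ℂ) * (b : ℂ)) • (A' * B') := by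
    rw [hA', hB', smul_mul_smul_comm, smul_smul]
    rw [show (a : ℂ) * (b : ℂ) * ((a : ℂ)⁻¹ * (b : ℂ)⁻¹) = ((a:ℂ) * (a:ℂ)⁻¹) * ((b:ℂ) * (b:ℂ)⁻¹) by ring]
    rw [mul_inv_cancel₀ (by exact_mod_cast ne_of_gt hap), mul_inv_cancel₀ (by exact_mod_cast ne_of_gt hbp)]
    simp
  calc numRad (A * B) = numRad (((a : ℂ) * (b : ℂ)) • (A' * B')) := by rw [← hABfac]
    _ ≤ ‖(a : ℂ) * (b : ℂ)‖ * numRad (A' * B') := numRad_smul_le _ _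
    _ = (a * b) * numRad (A' * B') := by
        rw [norm_mul, Complex.norm_real, Complex.norm_real, Real.norm_eq_abs, Real.norm_eq_abs,
          abs_of_pos hap, abs_of_pos hbp]
    _ ≤ (a * b) * 2 := by
        exact mul_le_mul_of_nonneg_left hhalf (by positivity)
    _ = 2 * a * b := by ring

lemma abNorm_nonneg (α β : ℝ) (T : H →L[ℂ] H) : 0 ≤ abNorm α β T := by
  apply Real.sSup_nonneg
  rintro r ⟨x, hx, rfl⟩
  exact Real.sqrt_nonneg _

lemma abNorm_bdd (α β : ℝ) (hα : 0 ≤ α) (hβ : 0 ≤ β) (T : H →L[ℂ] H) :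
    BddAbove {r : ℝ | ∃ x : H, ‖x‖ = 1 ∧
      r = Real.sqrt (α * ‖(inner ℂ (T x) x : ℂ)‖ ^ 2 + β * ‖T x‖ ^ 2)} := by
  refine ⟨Real.sqrt ((α + β) * ‖T‖ ^ 2), ?_⟩
  rintro r ⟨x, hx, rfl⟩
  apply Real.sqrt_le_sqrt
  have h1 : ‖(⟪T x, x⟫ : ℂ)‖ ≤ ‖T x‖ := by
    have := norm_inner_le_norm (𝕜 := ℂ) (T x) x
    rw [hx, mul_one] at this
    exact this
  have h2 : ‖T x‖ ≤ ‖T‖ := by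
    have := T.le_opNorm x
    rw [hx, mul_one] at this
    exact this
  have h1' : ‖(⟪T x, x⟫ : ℂ)‖ ^ 2 ≤ ‖T‖ ^ 2 := by
    nlinarith [norm_nonneg ((⟪T x, x⟫ : ℂ)), norm_nonneg (T x), norm_nonneg T]
  have h2' : ‖T x‖ ^ 2 ≤ ‖T‖ ^ 2 := by
    nlinarith [norm_nonneg (T x), norm_nonneg T]
  nlinarith [mul_le_mul_of_nonneg_left h1' hα, mul_le_mul_of_nonneg_left h2' hβ]

lemma point_le_abNorm (α β : ℝ) (hα : 0 ≤ α) (hβ : 0 ≤ β) (T : H →L[ℂ] H) {x : H}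
    (hx : ‖x‖ = 1) :
    Real.sqrt (α * ‖(⟪T x, x⟫ : ℂ)‖ ^ 2 + β * ‖T x‖ ^ 2) ≤ abNorm α β T :=
  le_csSup (abNorm_bdd α β hα hβ T) ⟨x, hx, rfl⟩

lemma sq_point_le_abNorm (α β : ℝ) (hα : 0 ≤ α) (hβ : 0 ≤ β) (T : H →L[ℂ] H) {x : H}
    (hx : ‖x‖ = 1) :
    α * ‖(⟪T x, x⟫ : ℂ)‖ ^ 2 + β * ‖T x‖ ^ 2 ≤ (abNorm α β T) ^ 2 := by
  have h := point_le_abNorm α β hα hβ T hx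
  have hnn : 0 ≤ α * ‖(⟪T x, x⟫ : ℂ)‖ ^ 2 + β * ‖T x‖ ^ 2 := by positivity
  calc α * ‖(⟪T x, x⟫ : ℂ)‖ ^ 2 + β * ‖T x‖ ^ 2
      = Real.sqrt (α * ‖(⟪T x, x⟫ : ℂ)‖ ^ 2 + β * ‖T x‖ ^ 2) ^ 2 := (Real.sq_sqrt hnn).symm
    _ ≤ (abNorm α β T) ^ 2 := by
        have := Real.sqrt_nonneg (α * ‖(⟪T x, x⟫ : ℂ)‖ ^ 2 + β * ‖T x‖ ^ 2)
        nlinarith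

lemma numRad_sq_le_abNorm (α β : ℝ) (hα : 0 ≤ α) (hβ : 0 ≤ β) (T : H →L[ℂ] H) :
    (α + β) * numRad T ^ 2 ≤ (abNorm α β T) ^ 2 := by
  rcases eq_or_lt_of_le (by linarith : (0:ℝ) ≤ α + β) with hz | hpos
  · rw [← hz, zero_mul]
    positivity
  have hle : numRad T ≤ Real.sqrt ((abNorm α β T) ^ 2 / (α + β)) := by
    apply Real.sSup_le
    · rintro r ⟨x, hx, rfl⟩
      have h1 : ‖(⟪T x, x⟫ : ℂ)‖ ≤ ‖T x‖ := by
        have := norm_inner_le_norm (𝕜 := ℂ) (T x) x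
        rw [hx, mul_one] at this
        exact this
      have h2 := sq_point_le_abNorm α β hα hβ T hx
      have h1sq : ‖(⟪T x, x⟫ : ℂ)‖ ^ 2 ≤ ‖T x‖ ^ 2 := by
        nlinarith [norm_nonneg ((⟪T x, x⟫ : ℂ)), norm_nonneg (T x)]
      have h3 : (α + β) * ‖(⟪T x, x⟫ : ℂ)‖ ^ 2 ≤ (abNorm α β T) ^ 2 := by
        nlinarith [mul_le_mul_of_nonneg_left h1sq hβ]
      have h4 : ‖(⟪T x, x⟫ : ℂ)‖ ^ 2 ≤ (abNorm α β T) ^ 2 / (α + β) :=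
        (le_div_iff₀ hpos).mpr (by linarith [mul_comm (α + β) (‖(⟪T x, x⟫ : ℂ)‖ ^ 2)])
      calc ‖(⟪T x, x⟫ : ℂ)‖ = Real.sqrt (‖(⟪T x, x⟫ : ℂ)‖ ^ 2) :=
            (Real.sqrt_sq (norm_nonneg _)).symm
        _ ≤ Real.sqrt ((abNorm α β T) ^ 2 / (α + β)) := Real.sqrt_le_sqrt h4
    · exact Real.sqrt_nonneg _
  have h5 : numRad T ^ 2 ≤ (abNorm α β T) ^ 2 / (α + β) := by
    have hnn : 0 ≤ (abNorm α β T) ^ 2 / (α + β) := by positivity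
    nlinarith [numRad_nonneg T, Real.sq_sqrt hnn, Real.sqrt_nonneg ((abNorm α β T) ^ 2 / (α + β))]
  rw [mul_comm]
  exact (le_div_iff₀ hpos).mp h5

lemma opNorm_sq_le_abNorm (α β : ℝ) (hα : 0 ≤ α) (hβ : 0 < β) (T : H →L[ℂ] H) :
    β * ‖T‖ ^ 2 ≤ (abNorm α β T) ^ 2 := by
  have hb : (0:ℝ) < β := hβ
  have hle : ‖T‖ ≤ Real.sqrt ((abNorm α β T) ^ 2 / β) := by
    apply T.opNorm_le_bound (Real.sqrt_nonneg _)
    intro u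
    rcases eq_or_ne u 0 with rfl | hu
    · simp
    · have hn : (0:ℝ) < ‖u‖ := norm_pos_iff.2 hu
      set c : ℂ := (‖u‖ : ℂ)⁻¹ with hc
      have hcn : ‖c‖ = ‖u‖⁻¹ := by
        rw [hc, norm_inv, Complex.norm_real, Real.norm_eq_abs, abs_of_pos hn]
      have hv : ‖c • u‖ = 1 := by
        rw [norm_smul, hcn]
        field_simp
      have h2 := sq_point_le_abNorm α β hα hβ.le T hv
      have h3 : β * ‖T (c • u)‖ ^ 2 ≤ (abNorm α β T) ^ 2 := by
        nlinarith [norm_nonneg ((⟪T (c • u), c • u⟫ : ℂ)), sq_nonneg (‖(⟪T (c • u), c • u⟫ : ℂ)‖)]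
      have h4 : ‖T (c • u)‖ ^ 2 ≤ (abNorm α β T) ^ 2 / β :=
        (le_div_iff₀ hb).mpr (by linarith [mul_comm β (‖T (c • u)‖ ^ 2)])
      have h5 : ‖T (c • u)‖ ≤ Real.sqrt ((abNorm α β T) ^ 2 / β) := by
        calc ‖T (c • u)‖ = Real.sqrt (‖T (c • u)‖ ^ 2) := (Real.sqrt_sq (norm_nonneg _)).symm
          _ ≤ _ := Real.sqrt_le_sqrt h4
      have h6 : ‖T u‖ = ‖u‖ * ‖T (c • u)‖ := by
        rw [map_smul, norm_smul, hcn]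
        field_simp
      rw [h6, mul_comm]
      exact mul_le_mul_of_nonneg_right h5 hn.le
  have h5 : ‖T‖ ^ 2 ≤ (abNorm α β T) ^ 2 / β := by
    have hnn : 0 ≤ (abNorm α β T) ^ 2 / β := by positivity
    nlinarith [norm_nonneg T, Real.sq_sqrt hnn, Real.sqrt_nonneg ((abNorm α β T) ^ 2 / β)]
  rw [mul_comm]
  exact (le_div_iff₀ hb).mp h5


/-- Bound for the `(α,β)`-norm of a product of commuting operators. -/
theorem abNorm_mul_le_of_comm (A B : H →L[ℂ] H) (hAB : A * B = B * A)
    (α β : ℝ) (hα : 0 ≤ α) (hβ : 0 < β) :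
    abNorm α β (A * B) ≤
      Real.sqrt (4 * α / (α + β) ^ 2 + 1 / β) * abNorm α β A * abNorm α β B := by
  have hab : (0:ℝ) < α + β := by linarith
  set w := numRad (A * B) with hw
  set nA := abNorm α β A with hnA
  set nB := abNorm α β B with hnB
  have hnA0 : 0 ≤ nA := abNorm_nonneg α β A
  have hnB0 : 0 ≤ nB := abNorm_nonneg α β B
  -- step 1
  have step1 : abNorm α β (A * B) ≤ Real.sqrt (α * w ^ 2 + β * ‖A * B‖ ^ 2) := by
    apply Real.sSup_le
    · rintro r ⟨x, hx, rfl⟩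
      apply Real.sqrt_le_sqrt
      have h1 : ‖(⟪(A * B) x, x⟫ : ℂ)‖ ≤ w := inner_le_numRad (A * B) hx
      have h2 : ‖(A * B) x‖ ≤ ‖A * B‖ := by
        have := (A * B).le_opNorm x
        rw [hx, mul_one] at this
        exact this
      have hw0 : 0 ≤ w := numRad_nonneg (A * B)
      have h1sq : ‖(⟪(A * B) x, x⟫ : ℂ)‖ ^ 2 ≤ w ^ 2 := by
        nlinarith [norm_nonneg ((⟪(A * B) x, x⟫ : ℂ))]
      have h2sq : ‖(A * B) x‖ ^ 2 ≤ ‖A * B‖ ^ 2 := by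
        nlinarith [norm_nonneg ((A * B) x)]
      nlinarith [mul_le_mul_of_nonneg_left h1sq hα, mul_le_mul_of_nonneg_left h2sq hβ.le]
    · exact Real.sqrt_nonneg _
  -- step 2: arithmetic
  have hwle : w ≤ 2 * numRad A * numRad B := numRad_mul_le A B hAB
  have hw0 : 0 ≤ w := numRad_nonneg (A * B)
  have hopsle : ‖A * B‖ ≤ ‖A‖ * ‖B‖ := norm_mul_le A B
  have ha2 : (α + β) * numRad A ^ 2 ≤ nA ^ 2 := numRad_sq_le_abNorm α β hα hβ.le A
  have hb2 : (α + β) * numRad B ^ 2 ≤ nB ^ 2 := numRad_sq_le_abNorm α β hα hβ.le B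
  have hpa : β * ‖A‖ ^ 2 ≤ nA ^ 2 := opNorm_sq_le_abNorm α β hα hβ A
  have hpb : β * ‖B‖ ^ 2 ≤ nB ^ 2 := opNorm_sq_le_abNorm α β hα hβ B
  have key : (α * w ^ 2 + β * ‖A * B‖ ^ 2) * ((α + β) ^ 2 * β) ≤
      (4 * α * β + (α + β) ^ 2) * (nA * nB) ^ 2 := by
    have hwA := numRad_nonneg A
    have hwB := numRad_nonneg B
    have hA0 := norm_nonneg A
    have hB0 := norm_nonneg B
    have hAB0 := norm_nonneg (A * B)
    have t1 : (α + β) ^ 2 * (numRad A * numRad B) ^ 2 ≤ (nA * nB) ^ 2 := by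
      nlinarith [mul_le_mul ha2 hb2 (by positivity) (by positivity)]
    have t2 : β ^ 2 * (‖A‖ * ‖B‖) ^ 2 ≤ (nA * nB) ^ 2 := by
      nlinarith [mul_le_mul hpa hpb (by positivity) (by positivity)]
    have t3 : w ^ 2 ≤ 4 * (numRad A * numRad B) ^ 2 := by nlinarith
    have t4 : ‖A * B‖ ^ 2 ≤ (‖A‖ * ‖B‖) ^ 2 := by nlinarith
    have u1a := mul_le_mul_of_nonneg_left t3 (sq_nonneg (α + β))
    have u1 : (α + β) ^ 2 * w ^ 2 ≤ 4 * (nA * nB) ^ 2 := by nlinarith [u1a, t1]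
    have u2a := mul_le_mul_of_nonneg_left t4 (sq_nonneg β)
    have u2 : β ^ 2 * ‖A * B‖ ^ 2 ≤ (nA * nB) ^ 2 := by nlinarith [u2a, t2]
    nlinarith [mul_le_mul_of_nonneg_left u1 (mul_nonneg hα hβ.le),
      mul_le_mul_of_nonneg_left u2 (sq_nonneg (α + β))]
  have hrw : 4 * α / (α + β) ^ 2 + 1 / β = (4 * α * β + (α + β) ^ 2) / ((α + β) ^ 2 * β) := by
    field_simp
    try ring
  have step2 : α * w ^ 2 + β * ‖A * B‖ ^ 2 ≤
      (4 * α / (α + β) ^ 2 + 1 / β) * (nA * nB) ^ 2 := by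
    rw [hrw, div_mul_eq_mul_div, le_div_iff₀ (by positivity)]
    exact key
  calc abNorm α β (A * B) ≤ Real.sqrt (α * w ^ 2 + β * ‖A * B‖ ^ 2) := step1
    _ ≤ Real.sqrt ((4 * α / (α + β) ^ 2 + 1 / β) * (nA * nB) ^ 2) := Real.sqrt_le_sqrt step2
    _ = Real.sqrt (4 * α / (α + β) ^ 2 + 1 / β) * (nA * nB) := by
        rw [Real.sqrt_mul (by positivity), Real.sqrt_sq (by positivity)]
    _ = Real.sqrt (4 * α / (α + β) ^ 2 + 1 / β) * nA * nB := by ring
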